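/- For the greedy-choice sequence with r = 2 and s = 1, (1 − p_k)·log(k+1) → 2 as k → ∞. -/
import Mathlib

open Filter Real

set_option maxHeartbeats 1000000 in

/-- Greedy choice with `r = 2`, `s = 1`: here `p_0 = 0` and `p_k` is the unique
solution in `(0,1)` of `(k+1)p_{k-1}² - kp_k² - 2p_k + 1 = 0`. Then
`(1 - p_k)·log(k+1) → 2` as `k → ∞`. -/
theorem stmt_15 (p : ℕ → ℝ) (hp0 : p 0 = 0)
    (hp : ∀ k, 1 ≤ k → p k ∈ Set.Ioo (0 : ℝ) 1 ∧
      ((k : ℝ) + 1) * p (k - 1) ^ 2 - (k : ℝ) * p k ^ 2 - 2 * p k + 1 = 0) :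
    Filter.Tendsto (fun k : ℕ => (1 - p k) * Real.log ((k : ℝ) + 1))
      Filter.atTop (nhds 2) := by
  -- reindexed recurrence
  have hp' : ∀ n : ℕ, ((n:ℝ) + 2) * p n ^ 2 - ((n:ℝ)+1) * p (n+1) ^ 2
      - 2 * p (n+1) + 1 = 0 := by
    intro n
    have h := (hp (n+1) (by omega)).2
    have hidx : n + 1 - 1 = n := by omega
    rw [hidx] at h
    push_cast at h
    linarith
  set q : ℕ → ℝ := fun n => 1 - p n with hqdef
  clear_value q
  have hq0 : q 0 = 1 := by simp [hqdef, hp0]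
  have hqpos : ∀ n, 0 < q n := by
    intro n
    match n with
    | 0 => rw [hq0]; norm_num
    | Nat.succ m =>
      have h := (hp (m+1) (by omega)).1.2
      simp only [hqdef]
      linarith
  have hqle1 : ∀ n, q n ≤ 1 := by
    intro n
    match n with
    | 0 => rw [hq0]
    | Nat.succ m =>
      have h := (hp (m+1) (by omega)).1.1
      simp only [hqdef]
      linarith
  have key : ∀ n : ℕ, (q n - q (n+1)) *
      (2*((n:ℝ)+2) - ((n:ℝ)+1)*(q n + q (n+1))) = q n ^ 2 := by
    intro n
    have h := hp' n
    simp only [hqdef]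
    linear_combination -h
  -- D bounds
  have hD2 : ∀ n : ℕ, 2 < 2*((n:ℝ)+2) - ((n:ℝ)+1)*(q n + q (n+1)) := by
    intro n
    have h1 := hqle1 n
    have h2 := hqle1 (n+1)
    have h2' : q (n+1) < 1 := by
      have := (hp (n+1) (by omega)).1.1
      simp only [hqdef]; linarith
    have hn : (0:ℝ) ≤ (n:ℝ) := Nat.cast_nonneg n
    nlinarith
  have anti : ∀ n : ℕ, q (n+1) < q n := by
    intro n
    have k := key n
    have d := hD2 n
    have := hqpos n
    nlinarith
  have qmono : ∀ m n : ℕ, m ≤ n → q n ≤ q m := by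
    intro m n hmn
    induction n with
    | zero =>
      have hm0 : m = 0 := by omega
      rw [hm0]
    | succ k ih =>
      rcases Nat.lt_or_ge m (k+1) with h | h
      · have := ih (by omega)
        have := anti k
        linarith
      · have : m = k + 1 := by omega
        rw [this]
  have hq1 : q 1 < 3/5 := by
    have h := hp' 0
    have h1 := (hp 1 (by omega)).1.1
    rw [hp0] at h
    simp only [hqdef]
    push_cast at h
    nlinarith
  have hqle35 : ∀ n : ℕ, 1 ≤ n → q n < 3/5 := by
    intro n hn
    exact lt_of_le_of_lt (qmono 1 n hn) hq1
  -- y and its increments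
  set y : ℕ → ℝ := fun n => (q n)⁻¹ with hydef
  clear_value y
  have ypos : ∀ n, 0 < y n := by
    intro n
    rw [hydef]
    exact inv_pos.2 (hqpos n)
  set Dm : ℕ → ℝ := fun n =>
    2*((n:ℝ)+2) - ((n:ℝ)+1)*(q n + q (n+1)) - q n with hDmdef
  clear_value Dm
  have hDmpos : ∀ n, 1 < Dm n := by
    intro n
    have := hD2 n
    have := hqle1 n
    simp only [hDmdef]
    linarith
  have hDmle : ∀ n, Dm n < 2*((n:ℝ)+2) := by
    intro n
    have h1 := hqpos n
    have h2 := hqpos (n+1)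
    have hn : (0:ℝ) ≤ (n:ℝ) := Nat.cast_nonneg n
    simp only [hDmdef]
    nlinarith
  have hstep : ∀ n : ℕ, (q n - q (n+1)) * Dm n = q n * q (n+1) := by
    intro n
    have k := key n
    simp only [hDmdef]
    linear_combination k
  have ydiff : ∀ n : ℕ, y (n+1) - y n = 1 / Dm n := by
    intro n
    have h := hstep n
    have ha := (hqpos n).ne'
    have hb := (hqpos (n+1)).ne'
    have hd : Dm n ≠ 0 := by have := hDmpos n; linarith
    simp only [hydef]
    field_simp
    linear_combination h
  -- lower increment bound
  have lb_step : ∀ n : ℕ, 1/(2*((n:ℝ)+2)) < y (n+1) - y n := by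
    intro n
    rw [ydiff n]
    have h1 := hDmpos n
    have h2 := hDmle n
    apply div_lt_div_of_pos_left one_pos (by linarith) h2
  -- upper increment bound, for n ≥ 1
  have ub_step : ∀ n : ℕ, 1 ≤ n →
      y (n+1) - y n ≤ (1 + 5 * q n)/(2*((n:ℝ)+2)) := by
    intro n hn
    rw [ydiff n]
    have ha0 := hqpos n
    have ha1 := hqle35 n hn
    have hb0 := hqpos (n+1)
    have hba := anti n
    have hM : (3:ℝ) ≤ (n:ℝ)+2 := by
      have : (1:ℝ) ≤ (n:ℝ) := by exact_mod_cast hn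
      linarith
    have hDlow : 2*((n:ℝ)+2) - 2*((n:ℝ)+2)*(q n) ≤ Dm n + q n := by
      simp only [hDmdef]
      nlinarith [mul_nonneg (by positivity : (0:ℝ) ≤ (n:ℝ)+1) (sub_nonneg.2 hba.le),
        ha0.le, hb0.le]
    have hgoal : 2*((n:ℝ)+2) ≤ (1 + 5 * q n) * Dm n := by
      nlinarith [mul_nonneg (sub_nonneg.2 hM) (mul_nonneg ha0.le
        (by linarith : (0:ℝ) ≤ 4 - 5 * q n)), hDmpos n]
    rw [div_le_div_iff₀ (by linarith [hDmpos n]) (by linarith)]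
    linarith
  -- log lemmas
  have log_le : ∀ n : ℕ, Real.log ((n:ℝ)+3) - Real.log ((n:ℝ)+2) ≤ 1/((n:ℝ)+2) := by
    intro n
    have h2 : (0:ℝ) < (n:ℝ)+2 := by positivity
    have h3 : (0:ℝ) < (n:ℝ)+3 := by positivity
    have := Real.log_le_sub_one_of_pos (show (0:ℝ) < ((n:ℝ)+3)/((n:ℝ)+2) by positivity)
    rw [Real.log_div h3.ne' h2.ne'] at this
    have heq : ((n:ℝ)+3)/((n:ℝ)+2) - 1 = 1/((n:ℝ)+2) := by
      field_simp
      norm_num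
    linarith
  have log_ge : ∀ n : ℕ, 1/((n:ℝ)+2) ≤ Real.log ((n:ℝ)+2) - Real.log ((n:ℝ)+1) := by
    intro n
    have h1 : (0:ℝ) < (n:ℝ)+1 := by positivity
    have h2 : (0:ℝ) < (n:ℝ)+2 := by positivity
    have := Real.log_le_sub_one_of_pos (show (0:ℝ) < ((n:ℝ)+1)/((n:ℝ)+2) by positivity)
    rw [Real.log_div h1.ne' h2.ne'] at this
    have h3 : ((n:ℝ)+1)/((n:ℝ)+2) - 1 = -(1/((n:ℝ)+2)) := by field_simp; ring
    rw [h3] at this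
    linarith
  -- lower telescope
  have LT : ∀ k : ℕ, 1 ≤ k →
      y 1 + (1/2)*(Real.log ((k:ℝ)+2) - Real.log 3) ≤ y k := by
    intro k hk
    induction k, hk using Nat.le_induction with
    | base => norm_num
    | succ k hk ih =>
      have h1 := lb_step k
      have h2 := log_le k
      have hcast : ((k+1:ℕ):ℝ) + 2 = (k:ℝ) + 3 := by push_cast; ring
      rw [hcast]
      have h3 : 1/(2*((k:ℝ)+2)) = (1/2) * (1/((k:ℝ)+2)) := by
        rw [one_div, one_div, one_div, mul_inv]
      linarith
  -- upper telescope
  have UT : ∀ N : ℕ, 1 ≤ N → ∀ k : ℕ, N ≤ k →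
      y k ≤ y N + ((1 + 5 * q N)/2) *
        (Real.log ((k:ℝ)+1) - Real.log ((N:ℝ)+1)) := by
    intro N hN k hk
    induction k, hk using Nat.le_induction with
    | base =>
      have : Real.log ((N:ℝ)+1) - Real.log ((N:ℝ)+1) = 0 := sub_self _
      rw [this, mul_zero, add_zero]
    | succ k hk ih =>
      have h1 := ub_step k (le_trans hN hk)
      have h2 := log_ge k
      have hqk : q k ≤ q N := qmono N k hk
      have hpos : (0:ℝ) < 1 + 5 * q N := by nlinarith [hqpos N]
      have hcast : ((k+1:ℕ):ℝ) + 1 = (k:ℝ) + 2 := by push_cast; ring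
      rw [hcast]
      have step1 : y (k+1) ≤ y k + (1 + 5 * q N)/(2*((k:ℝ)+2)) := by
        have h3 : (1 + 5 * q k)/(2*((k:ℝ)+2)) ≤ (1 + 5 * q N)/(2*((k:ℝ)+2)) := by
          gcongr
        linarith
      have step2 : (1 + 5 * q N)/(2*((k:ℝ)+2)) ≤
          ((1 + 5 * q N)/2) * (Real.log ((k:ℝ)+2) - Real.log ((k:ℝ)+1)) := by
        have h4 := mul_le_mul_of_nonneg_left (log_ge k)
          (by positivity : (0:ℝ) ≤ (1 + 5 * q N)/2)
        calc (1 + 5 * q N)/(2*((k:ℝ)+2)) = ((1 + 5 * q N)/2) * (1/((k:ℝ)+2)) := by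
              rw [div_mul_div_comm]
              norm_num
          _ ≤ _ := h4
      linarith
  -- limits
  have loglim : Tendsto (fun k : ℕ => Real.log ((k:ℝ)+1)) atTop atTop :=
    Real.tendsto_log_atTop.comp
      (tendsto_atTop_add_const_right _ 1 tendsto_natCast_atTop_atTop)
  have ylim : Tendsto y atTop atTop := by
    apply tendsto_atTop_mono' _ _
      (tendsto_atTop_add_const_left _ (y 1 - (1/2)*Real.log 3)
        (Tendsto.const_mul_atTop (by norm_num : (0:ℝ) < 1/2)
          (Real.tendsto_log_atTop.comp
            (tendsto_atTop_add_const_right _ 2 tendsto_natCast_atTop_atTop))))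
    filter_upwards [eventually_ge_atTop 1] with k hk
    have := LT k hk
    simp only [Function.comp]
    linarith
  have qlim : Tendsto q atTop (nhds 0) := by
    have h := ylim.inv_tendsto_atTop
    have heq : ∀ k, (y k)⁻¹ = q k := by
      intro k
      simp only [hydef, inv_inv]
    exact h.congr heq
  -- main ratio limit
  have htend : Tendsto (fun k : ℕ => y k / Real.log ((k:ℝ)+1)) atTop (nhds (1/2)) := by
    rw [tendsto_order]
    constructor
    · intro b hb
      have c0lim : Tendsto (fun k : ℕ => 1/2 + (y 1 - (1/2)*Real.log 3) / Real.log ((k:ℝ)+1))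
          atTop (nhds (1/2)) := by
        have := (tendsto_const_nhds (x := y 1 - (1/2)*Real.log 3)
          (f := atTop (α := ℕ))).div_atTop loglim
        simpa using tendsto_const_nhds.add this
      have hev := c0lim.eventually (eventually_gt_nhds hb)
      filter_upwards [hev, eventually_ge_atTop 2] with k hk1 hk2
      have hlogpos : 0 < Real.log ((k:ℝ)+1) := by
        apply Real.log_pos
        have : (2:ℝ) ≤ (k:ℝ) := by exact_mod_cast hk2
        linarith
      have hLT := LT k (by omega)
      have hlog2 : Real.log ((k:ℝ)+1) ≤ Real.log ((k:ℝ)+2) := by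
        apply Real.log_le_log (by positivity)
        linarith
      have hY : y 1 - (1/2)*Real.log 3 + (1/2) * Real.log ((k:ℝ)+1) ≤ y k := by
        linarith
      have hdiv : 1/2 + (y 1 - (1/2)*Real.log 3) / Real.log ((k:ℝ)+1) =
          (y 1 - (1/2)*Real.log 3 + (1/2) * Real.log ((k:ℝ)+1)) / Real.log ((k:ℝ)+1) := by
        field_simp
        ring
      have hfin : 1/2 + (y 1 - (1/2)*Real.log 3) / Real.log ((k:ℝ)+1) ≤
          y k / Real.log ((k:ℝ)+1) := by
        rw [hdiv]
        gcongr
      linarith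
    · intro b hb
      set ε := b - 1/2 with hεdef
      clear_value ε
      have hε : 0 < ε := by rw [hεdef]; linarith
      -- choose N with q N ≤ ε/5
      have hqev : ∀ᶠ n in atTop, q n ≤ ε/5 :=
        qlim.eventually (eventually_le_nhds (by positivity))
      obtain ⟨N, hN⟩ := (hqev.and (eventually_ge_atTop 1)).exists
      obtain ⟨hNq, hN1⟩ := hN
      have hcoef : (1 + 5 * q N)/2 ≤ 1/2 + ε/2 := by
        have := hqpos N
        nlinarith
      have hblim : Tendsto (fun k : ℕ => 1/2 + ε/2 + y N / Real.log ((k:ℝ)+1))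
          atTop (nhds (1/2 + ε/2)) := by
        have := (tendsto_const_nhds (x := y N) (f := atTop (α := ℕ))).div_atTop loglim
        simpa using tendsto_const_nhds.add this
      have hev := hblim.eventually (eventually_lt_nhds
        (show (1/2:ℝ) + ε/2 < b by rw [hεdef]; linarith))
      filter_upwards [hev, eventually_ge_atTop (max N 2)] with k hk1 hk2
      have hkN : N ≤ k := le_trans (le_max_left _ _) hk2
      have hk2' : 2 ≤ k := le_trans (le_max_right _ _) hk2
      have hlogpos : 0 < Real.log ((k:ℝ)+1) := by
        apply Real.log_pos
        have : (2:ℝ) ≤ (k:ℝ) := by exact_mod_cast hk2'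
        linarith
      have hUT := UT N hN1 k hkN
      have hlogN : 0 ≤ Real.log ((N:ℝ)+1) := by
        apply Real.log_nonneg
        have : (0:ℝ) ≤ (N:ℝ) := Nat.cast_nonneg N
        linarith
      have hcpos : (0:ℝ) ≤ (1 + 5 * q N)/2 := by linarith [hqpos N]
      have hY : y k ≤ y N + (1/2 + ε/2) * Real.log ((k:ℝ)+1) := by
        have h5 : ((1 + 5 * q N)/2) * (Real.log ((k:ℝ)+1) - Real.log ((N:ℝ)+1)) ≤
            ((1 + 5 * q N)/2) * Real.log ((k:ℝ)+1) := by
          apply mul_le_mul_of_nonneg_left _ hcpos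
          linarith
        have h6 : ((1 + 5 * q N)/2) * Real.log ((k:ℝ)+1) ≤
            (1/2 + ε/2) * Real.log ((k:ℝ)+1) := by
          apply mul_le_mul_of_nonneg_right hcoef hlogpos.le
        linarith
      have hdiv : 1/2 + ε/2 + y N / Real.log ((k:ℝ)+1) =
          (y N + (1/2 + ε/2) * Real.log ((k:ℝ)+1)) / Real.log ((k:ℝ)+1) := by
        field_simp
        ring
      have hfin : y k / Real.log ((k:ℝ)+1) ≤ 1/2 + ε/2 + y N / Real.log ((k:ℝ)+1) := by
        rw [hdiv]
        gcongr
      linarith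
  -- conclude
  have hinv := htend.inv₀ (by norm_num : (1/2:ℝ) ≠ 0)
  have h2 : ((1:ℝ)/2)⁻¹ = 2 := by norm_num
  rw [h2] at hinv
  apply hinv.congr
  intro k
  have hy0 : y k ≠ 0 := (ypos k).ne'
  rw [inv_div, div_eq_mul_inv]
  simp only [hydef, inv_inv, hqdef]
  ring
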